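/- Let v ≥ 1 be an integer, λ̃ > 0 and ρ > 0 real numbers, and let j, k ∈ {1,…,v}. Then ∫_{B_v(ρ)} x_j² x_k² · (2πλ̃)^{-v/2} · exp(−∑_{i=1}^v x_i²/(2λ̃)) dx = (1 + 2δ_{jk}) · λ̃² · F_{v+4}(ρ/λ̃); in particular the fourth moment with j = k equals 3λ̃²·F_{v+4}(ρ/λ̃) and the mixed moment with j ≠ k equals λ̃²·F_{v+4}(ρ/λ̃). -/

import Mathlib

open Real MeasureTheory Metric

/-- Chi-squared cumulative distribution function with `ν` degrees of freedom. -/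
noncomputable def chiCDF (ν x : ℝ) : ℝ :=
  ((2 : ℝ) ^ (ν / 2) * Real.Gamma (ν / 2))⁻¹ *
    ∫ t in (0 : ℝ)..x, t ^ (ν / 2 - 1) * Real.exp (-t / 2)

namespace GaussBall

noncomputable def gball (v : ℕ) (l : ℝ) (x : EuclideanSpace ℝ (Fin v)) : ℝ :=
  (2 * Real.pi * l) ^ (-(v : ℝ) / 2) * Real.exp (-‖x‖ ^ 2 / (2 * l))

noncomputable def II (v : ℕ) (l ρ : ℝ) (w : EuclideanSpace ℝ (Fin v) → ℝ) : ℝ :=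
  ∫ x in closedBall (0 : EuclideanSpace ℝ (Fin v)) (Real.sqrt ρ), w x * gball v l x

variable {v : ℕ}

lemma gball_cont (l : ℝ) : Continuous (gball v l) := by
  unfold gball; fun_prop

lemma coord_cont (i : Fin v) : Continuous (fun x : EuclideanSpace ℝ (Fin v) => x i) :=
  (EuclideanSpace.proj (𝕜 := ℝ) i).continuous

lemma II_integrable (l ρ : ℝ) {w : EuclideanSpace ℝ (Fin v) → ℝ} (hw : Continuous w) :
    IntegrableOn (fun x => w x * gball v l x)
      (closedBall (0 : EuclideanSpace ℝ (Fin v)) (Real.sqrt ρ)) :=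
  (hw.mul (gball_cont l)).continuousOn.integrableOn_compact (isCompact_closedBall _ _)

lemma II_isometry (l ρ : ℝ) (w : EuclideanSpace ℝ (Fin v) → ℝ)
    (f : EuclideanSpace ℝ (Fin v) ≃ₗᵢ[ℝ] EuclideanSpace ℝ (Fin v)) :
    II v l ρ w = II v l ρ (fun x => w (f x)) := by
  unfold II
  rw [← f.measurePreserving.setIntegral_preimage_emb f.toHomeomorph.measurableEmbedding
    (fun x => w x * gball v l x) _]
  have hs : f ⁻¹' closedBall 0 (Real.sqrt ρ) = closedBall 0 (Real.sqrt ρ) := by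
    ext x
    simp [mem_closedBall, dist_zero_right, f.norm_map]
  rw [hs]
  refine setIntegral_congr_fun (measurableSet_closedBall) fun x _ => ?_
  simp [gball, f.norm_map]

lemma II_perm (v : ℕ) (l ρ : ℝ) (σ : Equiv.Perm (Fin v)) (j k : Fin v) :
    II v l ρ (fun x => x j ^ 2 * x k ^ 2) =
      II v l ρ (fun x => x (σ j) ^ 2 * x (σ k) ^ 2) := by
  have := II_isometry l ρ (fun x => x j ^ 2 * x k ^ 2)
    (LinearIsometryEquiv.piLpCongrLeft 2 ℝ ℝ σ.symm)
  rw [this]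
  congr 1

/- rotation isometry -/

lemma sum_split (j k : Fin v) (hjk : j ≠ k) (f : Fin v → ℝ) :
    ∑ i, f i = f j + (f k + ∑ i ∈ (Finset.univ.erase j).erase k, f i) := by
  rw [← Finset.add_sum_erase _ f (Finset.mem_univ j),
    ← Finset.add_sum_erase _ f (Finset.mem_erase.2 ⟨hjk.symm, Finset.mem_univ k⟩)]

noncomputable def rotFun (j k : Fin v) (x : EuclideanSpace ℝ (Fin v)) :
    EuclideanSpace ℝ (Fin v) :=
  WithLp.toLp 2 (fun i => if i = j then (Real.sqrt 2)⁻¹ * (x j + x k)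
    else if i = k then (Real.sqrt 2)⁻¹ * (x j - x k) else x i)

lemma rotFun_apply_of_ne (j k : Fin v) (x : EuclideanSpace ℝ (Fin v)) {i : Fin v}
    (h1 : i ≠ j) (h2 : i ≠ k) : rotFun j k x i = x i := by
  simp [rotFun, h1, h2]

lemma rotFun_apply_j (j k : Fin v) (x : EuclideanSpace ℝ (Fin v)) :
    rotFun j k x j = (Real.sqrt 2)⁻¹ * (x j + x k) := by simp [rotFun]

lemma rotFun_apply_k (j k : Fin v) (x : EuclideanSpace ℝ (Fin v)) (hjk : j ≠ k) :
    rotFun j k x k = (Real.sqrt 2)⁻¹ * (x j - x k) := by simp [rotFun, hjk.symm]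

lemma hs2 : (Real.sqrt 2)⁻¹ * (Real.sqrt 2)⁻¹ = 2⁻¹ := by
  rw [← mul_inv, Real.mul_self_sqrt (by norm_num)]

lemma rotFun_invol (j k : Fin v) (hjk : j ≠ k) (x : EuclideanSpace ℝ (Fin v)) :
    rotFun j k (rotFun j k x) = x := by
  ext i
  rcases eq_or_ne i j with rfl | h1
  · rw [rotFun_apply_j, rotFun_apply_j, rotFun_apply_k _ _ _ hjk]
    linear_combination (2 * x i) * hs2
  rcases eq_or_ne i k with rfl | h2
  · rw [rotFun_apply_k _ _ _ hjk, rotFun_apply_j, rotFun_apply_k _ _ _ hjk]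
    linear_combination (2 * x i) * hs2
  · rw [rotFun_apply_of_ne j k _ h1 h2, rotFun_apply_of_ne j k _ h1 h2]

noncomputable def rotIso (j k : Fin v) (hjk : j ≠ k) :
    EuclideanSpace ℝ (Fin v) ≃ₗᵢ[ℝ] EuclideanSpace ℝ (Fin v) := by
  refine ⟨⟨⟨⟨rotFun j k, ?_⟩, ?_⟩, rotFun j k, rotFun_invol j k hjk, rotFun_invol j k hjk⟩, ?_⟩
  · intro x y
    ext i
    simp only [rotFun, PiLp.add_apply, PiLp.toLp_apply]
    split_ifs <;> ring
  · intro c x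
    ext i
    simp only [rotFun, PiLp.smul_apply, PiLp.toLp_apply, smul_eq_mul, RingHom.id_apply]
    split_ifs <;> ring
  · intro x
    show ‖rotFun j k x‖ = ‖x‖
    rw [EuclideanSpace.norm_eq, EuclideanSpace.norm_eq]
    congr 1
    rw [sum_split j k hjk (fun i => ‖rotFun j k x i‖ ^ 2),
      sum_split j k hjk (fun i => ‖x i‖ ^ 2)]
    have hsum : ∀ i ∈ (Finset.univ.erase j).erase k, ‖rotFun j k x i‖ ^ 2 = ‖x i‖ ^ 2 := by
      intro i hi
      obtain ⟨h2, h1, -⟩ := Finset.mem_erase.1 hi |>.imp id Finset.mem_erase.1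
      rw [rotFun_apply_of_ne j k x h1 h2]
    rw [Finset.sum_congr rfl hsum, rotFun_apply_j, rotFun_apply_k _ _ _ hjk]
    simp only [Real.norm_eq_abs, sq_abs]
    linear_combination ((x j + x k) ^ 2 + (x j - x k) ^ 2) * hs2

lemma rotIso_apply (j k : Fin v) (hjk : j ≠ k) (x : EuclideanSpace ℝ (Fin v)) :
    rotIso j k hjk x = rotFun j k x := rfl

/- substitution -/

lemma rpow_cont (a : ℝ) (ha : 0 ≤ a) : Continuous fun t : ℝ => t ^ a :=
  continuous_iff_continuousAt.2 fun x => Real.continuousAt_rpow_const x a (Or.inr ha)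

lemma subst_lemma (v : ℕ) (l ρ : ℝ) (hl : 0 < l) (hρ : 0 < ρ) :
    ∫ y in (0:ℝ)..(Real.sqrt ρ), y ^ (v+3) * Real.exp (-y^2/(2*l)) =
      l ^ (((v:ℝ)+4)/2) / 2 *
        ∫ t in (0:ℝ)..(ρ/l), t ^ (((v:ℝ)+4)/2 - 1) * Real.exp (-t/2) := by
  set a : ℝ := ((v:ℝ)+4)/2 - 1 with ha_def
  have ha : 0 < a := by
    have : a = ((v:ℝ)+2)/2 := by rw [ha_def]; ring
    rw [this]; positivity
  set F : ℝ → ℝ := fun t => t ^ a * Real.exp (-t/2) with hF_def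
  have hFc : Continuous F := (rpow_cont a ha.le).mul (Real.continuous_exp.comp (by fun_prop))
  have hder : ∀ x ∈ Set.uIcc (0:ℝ) (Real.sqrt ρ),
      HasDerivAt (fun y : ℝ => y^2/l) (2*x/l) x := by
    intro x _
    have := (hasDerivAt_pow 2 x).div_const l
    simpa [mul_comm] using this
  have key := intervalIntegral.integral_comp_smul_deriv hder (by fun_prop) hFc
  have hg0 : (0:ℝ)^2/l = 0 := by simp
  have hgr : (Real.sqrt ρ)^2/l = ρ/l := by rw [Real.sq_sqrt hρ.le]
  rw [hg0, hgr] at key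
  simp only [Function.comp] at key
  have e1 : ∀ y ∈ Set.uIcc (0:ℝ) (Real.sqrt ρ),
      (2*y/l) • F (y^2/l) = (2 / l ^ (((v:ℝ)+4)/2)) * (y ^ (v+3) * Real.exp (-y^2/(2*l))) := by
    intro y hy
    rw [Set.uIcc_of_le (Real.sqrt_nonneg ρ)] at hy
    have hy0 : 0 ≤ y := hy.1
    have h1 : (y^2/l) ^ a = y ^ ((v:ℝ)+2) / l ^ a := by
      rw [Real.div_rpow (sq_nonneg y) hl.le]
      congr 1
      rw [← Real.rpow_natCast y 2, ← Real.rpow_mul hy0]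
      congr 1
      rw [ha_def]; push_cast; ring
    have h2 : y ^ ((v:ℝ)+2) = y ^ (v+2 : ℕ) := by
      rw [← Real.rpow_natCast y (v+2)]; push_cast; ring_nf
    have h3 : l ^ (((v:ℝ)+4)/2) = l ^ a * l := by
      rw [show ((v:ℝ)+4)/2 = a + 1 by rw [ha_def]; ring, Real.rpow_add_one hl.ne']
    have h4 : -(y^2/l)/2 = -y^2/(2*l) := by
      field_simp
    rw [smul_eq_mul]
    simp only [hF_def]
    rw [h1, h2, h3, h4]
    have hla : (0:ℝ) < l ^ a := Real.rpow_pos_of_pos hl a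
    field_simp
    ring
  rw [intervalIntegral.integral_congr e1, intervalIntegral.integral_const_mul] at key
  have hlp : (0:ℝ) < l ^ (((v:ℝ)+4)/2) := Real.rpow_pos_of_pos hl _
  have h5 : (∫ t in (0:ℝ)..(ρ/l), t ^ a * Real.exp (-t/2)) =
      (2 / l ^ (((v:ℝ)+4)/2)) * ∫ y in (0:ℝ)..(Real.sqrt ρ), y ^ (v+3) * Real.exp (-y^2/(2*l)) :=
    key.symm
  rw [h5]
  field_simp

/- radial integral -/

lemma II_radial (v : ℕ) (hv : 1 ≤ v) (l ρ : ℝ) (hl : 0 < l) (hρ : 0 < ρ) :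
    II v l ρ (fun x => ‖x‖ ^ 4) =
      (v : ℝ) * ((v : ℝ) + 2) * l ^ 2 * chiCDF ((v : ℝ) + 4) (ρ / l) := by
  classical
  haveI : Nonempty (Fin v) := ⟨⟨0, hv⟩⟩
  haveI : Nontrivial (EuclideanSpace ℝ (Fin v)) :=
    Module.nontrivial_of_finrank_pos (R := ℝ)
      (by rw [finrank_euclideanSpace_fin]; omega)
  set C : ℝ := (2 * Real.pi * l) ^ (-(v : ℝ) / 2) with hC
  set f : ℝ → ℝ := fun r => if r ≤ Real.sqrt ρ then r ^ 4 * (C * Real.exp (-r^2/(2*l))) else 0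
    with hf
  have step1 : II v l ρ (fun x => ‖x‖ ^ 4) = ∫ x : EuclideanSpace ℝ (Fin v), f ‖x‖ := by
    rw [II, ← integral_indicator measurableSet_closedBall]
    congr 1
    funext x
    rw [Set.indicator_apply, mem_closedBall, dist_zero_right]
    simp only [hf, gball, hC]
  rw [step1, MeasureTheory.integral_fun_norm_addHaar volume f]
  rw [finrank_euclideanSpace_fin]
  have hGpos : 0 < Real.Gamma ((v:ℝ)/2) := Real.Gamma_pos_of_pos (by positivity)
  have hG1 : Real.Gamma ((v:ℝ)/2 + 1) = ((v:ℝ)/2) * Real.Gamma ((v:ℝ)/2) :=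
    Real.Gamma_add_one (by positivity)
  have hG1pos : 0 < Real.Gamma ((v:ℝ)/2 + 1) := Real.Gamma_pos_of_pos (by positivity)
  have hvol : volume.real (ball (0 : EuclideanSpace ℝ (Fin v)) 1)
      = Real.sqrt Real.pi ^ v / Real.Gamma ((v:ℝ)/2 + 1) := by
    rw [measureReal_def, EuclideanSpace.volume_ball (Fin v) 0 1]
    simp only [Fintype.card_fin]
    rw [ENNReal.ofReal_one, one_pow, one_mul, ENNReal.toReal_ofReal (by positivity)]
  have step2 : (∫ y in Set.Ioi (0:ℝ), y ^ (v-1) • f y)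
      = C * ∫ y in (0:ℝ)..(Real.sqrt ρ), y^(v+3) * Real.exp (-y^2/(2*l)) := by
    have hpt : ∀ y : ℝ, y ^ (v-1) • f y =
        Set.indicator (Set.Iic (Real.sqrt ρ))
          (fun y => C * (y^(v+3) * Real.exp (-y^2/(2*l)))) y := by
      intro y
      by_cases h : y ≤ Real.sqrt ρ
      · simp only [hf, if_pos h, Set.indicator_of_mem (Set.mem_Iic.2 h), smul_eq_mul]
        rw [show v+3 = (v-1)+4 from by omega, pow_add]
        ring
      · simp [hf, if_neg h, Set.indicator_of_notMem (fun hc => h (Set.mem_Iic.1 hc))]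
    simp only [hpt]
    rw [setIntegral_indicator measurableSet_Iic, Set.Ioi_inter_Iic,
      ← intervalIntegral.integral_of_le (Real.sqrt_nonneg ρ),
      intervalIntegral.integral_const_mul]
  rw [step2, subst_lemma v l ρ hl hρ, hvol]
  rw [nsmul_eq_mul, smul_eq_mul]
  rw [chiCDF]
  have hC2 : C = (2:ℝ)^(-(v:ℝ)/2) * Real.pi ^ (-(v:ℝ)/2) * l ^ (-(v:ℝ)/2) := by
    rw [hC, Real.mul_rpow (by positivity) hl.le,
      Real.mul_rpow (by norm_num) Real.pi_pos.le]
  have hsq : (Real.sqrt Real.pi)^v = Real.pi ^ ((v:ℝ)/2) := by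
    rw [Real.sqrt_eq_rpow, ← Real.rpow_natCast (Real.pi ^ ((1:ℝ)/2)) v,
      ← Real.rpow_mul Real.pi_pos.le]
    congr 1
    ring
  have h2s : (2:ℝ) ^ (((v:ℝ)+4)/2) = (2:ℝ)^((v:ℝ)/2) * 4 := by
    rw [show ((v:ℝ)+4)/2 = (v:ℝ)/2 + 2 by ring, Real.rpow_add two_pos,
      show ((2:ℝ) ^ (2:ℝ)) = 4 by rw [Real.rpow_two]; norm_num]
  have hG2 : Real.Gamma (((v:ℝ)+4)/2) = ((v:ℝ)/2+1) * (((v:ℝ)/2) * Real.Gamma ((v:ℝ)/2)) := by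
    rw [show ((v:ℝ)+4)/2 = ((v:ℝ)/2+1)+1 by ring, Real.Gamma_add_one (by positivity), hG1]
  have hb : Real.pi ^ (-(v:ℝ)/2) = (Real.pi ^ ((v:ℝ)/2))⁻¹ := by
    rw [show -(v:ℝ)/2 = -((v:ℝ)/2) by ring, Real.rpow_neg Real.pi_pos.le]
  have hd : (2:ℝ) ^ (-(v:ℝ)/2) = ((2:ℝ) ^ ((v:ℝ)/2))⁻¹ := by
    rw [show -(v:ℝ)/2 = -((v:ℝ)/2) by ring, Real.rpow_neg (by norm_num)]
  have he1 : l ^ (-(v:ℝ)/2) = (l ^ ((v:ℝ)/2))⁻¹ := by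
    rw [show -(v:ℝ)/2 = -((v:ℝ)/2) by ring, Real.rpow_neg hl.le]
  have he2 : l ^ (((v:ℝ)+4)/2) = l ^ ((v:ℝ)/2) * l^2 := by
    rw [show ((v:ℝ)+4)/2 = (v:ℝ)/2+2 by ring, Real.rpow_add hl, Real.rpow_two]
  rw [hsq, hC2, hG2, hG1, h2s, hb, hd, he1, he2]
  have hV : (0:ℝ) < (v:ℝ) := by
    have : (1:ℝ) ≤ (v:ℝ) := by exact_mod_cast hv
    linarith
  have p1 : (0:ℝ) < Real.pi ^ ((v:ℝ)/2) := Real.rpow_pos_of_pos Real.pi_pos _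
  have p2 : (0:ℝ) < (2:ℝ) ^ ((v:ℝ)/2) := Real.rpow_pos_of_pos (by norm_num) _
  have p3 : (0:ℝ) < l ^ ((v:ℝ)/2) := Real.rpow_pos_of_pos hl _
  field_simp
  ring

/- norm squared -/
lemma norm_sq_eq (x : EuclideanSpace ℝ (Fin v)) : ‖x‖ ^ 2 = ∑ i, x i ^ 2 := by
  rw [EuclideanSpace.norm_eq, Real.sq_sqrt (by positivity)]
  simp [sq_abs]

/- main evaluation -/
lemma II_eval (v : ℕ) (hv : 1 ≤ v) (l ρ : ℝ) (hl : 0 < l) (hρ : 0 < ρ) (j k : Fin v) :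
    II v l ρ (fun x => x j ^ 2 * x k ^ 2) =
      (1 + 2 * (if j = k then (1:ℝ) else 0)) * l ^ 2 * chiCDF ((v : ℝ) + 4) (ρ / l) := by
  classical
  set A : ℝ := II v l ρ (fun x => x j ^ 2 * x j ^ 2) with hA_def
  have hdiag : ∀ a : Fin v, II v l ρ (fun x => x a ^ 2 * x a ^ 2) = A := by
    intro a
    have := II_perm v l ρ (Equiv.swap j a) j j
    rw [hA_def, this, Equiv.swap_apply_left]
  have hint : ∀ a b : Fin v,
      IntegrableOn (fun x : EuclideanSpace ℝ (Fin v) => (x a ^ 2 * x b ^ 2) * gball v l x)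
        (closedBall (0 : EuclideanSpace ℝ (Fin v)) (Real.sqrt ρ)) := fun a b =>
    II_integrable l ρ (((coord_cont a).pow 2).mul ((coord_cont b).pow 2))
  -- off-diagonal via rotation
  have hoff : ∀ a b : Fin v, a ≠ b → II v l ρ (fun x => x a ^ 2 * x b ^ 2) = A / 3 := by
    intro a b hab
    have hrot := II_isometry l ρ (fun x => x a ^ 2 * x b ^ 2) (rotIso a b hab)
    have hptw : ∀ x : EuclideanSpace ℝ (Fin v),
        ((rotIso a b hab x) a ^ 2 * (rotIso a b hab x) b ^ 2) * gball v l x =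
          (4:ℝ)⁻¹ * ((x a ^ 2 * x a ^ 2) * gball v l x) +
          (4:ℝ)⁻¹ * ((x b ^ 2 * x b ^ 2) * gball v l x) -
          (2:ℝ)⁻¹ * ((x a ^ 2 * x b ^ 2) * gball v l x) := by
      intro x
      rw [rotIso_apply, rotFun_apply_j, rotFun_apply_k _ _ _ hab]
      have h4 : ((Real.sqrt 2)⁻¹ * (x a + x b)) ^ 2 * ((Real.sqrt 2)⁻¹ * (x a - x b)) ^ 2 =
          (4:ℝ)⁻¹ * (x a ^ 2 * x a ^ 2) + (4:ℝ)⁻¹ * (x b ^ 2 * x b ^ 2)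
            - (2:ℝ)⁻¹ * (x a ^ 2 * x b ^ 2) := by
        have h := hs2
        linear_combination ((x a + x b) ^ 2 * (x a - x b) ^ 2 *
          ((Real.sqrt 2)⁻¹ * (Real.sqrt 2)⁻¹ + 2⁻¹)) * h
      rw [h4]; ring
    have hIrot : II v l ρ (fun x => (rotIso a b hab x) a ^ 2 * (rotIso a b hab x) b ^ 2) =
        (4:ℝ)⁻¹ * II v l ρ (fun x => x a ^ 2 * x a ^ 2) +
        (4:ℝ)⁻¹ * II v l ρ (fun x => x b ^ 2 * x b ^ 2) -
        (2:ℝ)⁻¹ * II v l ρ (fun x => x a ^ 2 * x b ^ 2) := by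
      unfold II
      have i1 : Integrable (fun x : EuclideanSpace ℝ (Fin v) =>
          (4:ℝ)⁻¹ * (x a ^ 2 * x a ^ 2 * gball v l x))
          (volume.restrict (closedBall 0 (Real.sqrt ρ))) := (hint a a).const_mul _
      have i2 : Integrable (fun x : EuclideanSpace ℝ (Fin v) =>
          (4:ℝ)⁻¹ * (x b ^ 2 * x b ^ 2 * gball v l x))
          (volume.restrict (closedBall 0 (Real.sqrt ρ))) := (hint b b).const_mul _
      have i3 : Integrable (fun x : EuclideanSpace ℝ (Fin v) =>
          (2:ℝ)⁻¹ * (x a ^ 2 * x b ^ 2 * gball v l x))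
          (volume.restrict (closedBall 0 (Real.sqrt ρ))) := (hint a b).const_mul _
      have i12 : Integrable (fun x : EuclideanSpace ℝ (Fin v) =>
          (4:ℝ)⁻¹ * (x a ^ 2 * x a ^ 2 * gball v l x) +
          (4:ℝ)⁻¹ * (x b ^ 2 * x b ^ 2 * gball v l x))
          (volume.restrict (closedBall 0 (Real.sqrt ρ))) := i1.add i2
      calc (∫ x in closedBall (0 : EuclideanSpace ℝ (Fin v)) (Real.sqrt ρ),
              (fun x : EuclideanSpace ℝ (Fin v) =>
                (rotIso a b hab) x a ^ 2 * (rotIso a b hab) x b ^ 2) x * gball v l x)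
          = ∫ x in closedBall (0 : EuclideanSpace ℝ (Fin v)) (Real.sqrt ρ),
              ((4:ℝ)⁻¹ * (x a ^ 2 * x a ^ 2 * gball v l x) +
               (4:ℝ)⁻¹ * (x b ^ 2 * x b ^ 2 * gball v l x) -
               (2:ℝ)⁻¹ * (x a ^ 2 * x b ^ 2 * gball v l x)) :=
            setIntegral_congr_fun measurableSet_closedBall fun x _ => hptw x
        _ = (∫ x in closedBall (0 : EuclideanSpace ℝ (Fin v)) (Real.sqrt ρ),
              ((4:ℝ)⁻¹ * (x a ^ 2 * x a ^ 2 * gball v l x) +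
               (4:ℝ)⁻¹ * (x b ^ 2 * x b ^ 2 * gball v l x))) -
            ∫ x in closedBall (0 : EuclideanSpace ℝ (Fin v)) (Real.sqrt ρ),
              (2:ℝ)⁻¹ * (x a ^ 2 * x b ^ 2 * gball v l x) := integral_sub i12 i3
        _ = _ := by
            rw [integral_add i1 i2, integral_const_mul, integral_const_mul, integral_const_mul]
    rw [hIrot, hdiag a, hdiag b] at hrot
    linarith [hrot]
  have hval : ∀ a b : Fin v, II v l ρ (fun x => x a ^ 2 * x b ^ 2) =
      (if a = b then A else A / 3) := by
    intro a b
    split_ifs with h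
    · subst h; exact hdiag a
    · exact hoff a b h
  -- total sum equals radial integral
  have hsum : (∑ a : Fin v, ∑ b : Fin v, II v l ρ (fun x => x a ^ 2 * x b ^ 2)) =
      II v l ρ (fun x => ‖x‖ ^ 4) := by
    unfold II
    have inner : ∀ a : Fin v,
        (∑ b : Fin v, ∫ x in closedBall (0 : EuclideanSpace ℝ (Fin v)) (Real.sqrt ρ),
            (x a ^ 2 * x b ^ 2) * gball v l x) =
        ∫ x in closedBall (0 : EuclideanSpace ℝ (Fin v)) (Real.sqrt ρ),
            ((∑ b : Fin v, x a ^ 2 * x b ^ 2) * gball v l x) := by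
      intro a
      rw [← integral_finset_sum _ (fun b _ => hint a b)]
      congr 1
      funext x
      rw [Finset.sum_mul]
    simp only [inner]
    rw [← integral_finset_sum _ (fun a _ => ?_)]
    · refine setIntegral_congr_fun measurableSet_closedBall fun x _ => ?_
      rw [← Finset.sum_mul]
      congr 1
      rw [show ‖x‖ ^ 4 = (‖x‖^2) * (‖x‖^2) by ring, norm_sq_eq,
        Finset.sum_mul_sum]
    · exact II_integrable l ρ (continuous_finset_sum _ fun b _ =>
        (((coord_cont _).pow 2).mul ((coord_cont b).pow 2)))
  rw [II_radial v hv l ρ hl hρ] at hsum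
  have hsum2 : (∑ a : Fin v, ∑ b : Fin v, II v l ρ (fun x => x a ^ 2 * x b ^ 2)) =
      (v:ℝ) * ((v:ℝ) * (A/3) + (A - A/3)) := by
    rw [Finset.sum_congr rfl (fun a _ => Finset.sum_congr rfl (fun b _ => hval a b))]
    have hrow : ∀ a : Fin v, (∑ b : Fin v, if a = b then A else A / 3) =
        (v:ℝ) * (A/3) + (A - A/3) := by
      intro a
      have : ∀ b : Fin v, (if a = b then A else A / 3) =
          A/3 + (if a = b then A - A/3 else 0) := by
        intro b; split_ifs <;> ring
      simp only [this]
      rw [Finset.sum_add_distrib, Finset.sum_const, Finset.sum_ite_eq, if_pos (Finset.mem_univ a)]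
      simp [Finset.card_univ, mul_comm]
    rw [Finset.sum_congr rfl (fun a _ => hrow a), Finset.sum_const, Finset.card_univ]
    simp only [nsmul_eq_mul, Fintype.card_fin]
  rw [hsum2] at hsum
  have hV : (0:ℝ) < (v:ℝ) := by
    have : (1:ℝ) ≤ (v:ℝ) := by exact_mod_cast hv
    linarith
  have hne : (v:ℝ) * ((v:ℝ) + 2) ≠ 0 := by positivity
  have hAval : A = 3 * (l ^ 2 * chiCDF ((v : ℝ) + 4) (ρ / l)) := by
    apply mul_left_cancel₀ hne
    ring_nf
    ring_nf at hsum
    linarith [hsum]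
  rw [hval j k]
  split_ifs with h
  · rw [hAval]; ring
  · rw [hAval]; ring

end GaussBall

open GaussBall in
theorem gaussian_ball_fourth_moment_aux (v : ℕ) (hv : 1 ≤ v) (lamt ρ : ℝ)
    (hl : 0 < lamt) (hρ : 0 < ρ) (j k : Fin v) :
    (∫ x in {y : Fin v → ℝ | ∑ i, y i ^ 2 ≤ ρ},
        x j ^ 2 * x k ^ 2 * ((2 * Real.pi * lamt) ^ (-(v : ℝ) / 2) *
          Real.exp (-(∑ i, x i ^ 2) / (2 * lamt))) ∂volume =
      (1 + 2 * (if j = k then (1 : ℝ) else 0)) * lamt ^ 2 * chiCDF (v + 4) (ρ / lamt)) := by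
  have key : (∫ x in {y : Fin v → ℝ | ∑ i, y i ^ 2 ≤ ρ},
        x j ^ 2 * x k ^ 2 * ((2 * Real.pi * lamt) ^ (-(v : ℝ) / 2) *
          Real.exp (-(∑ i, x i ^ 2) / (2 * lamt))) ∂volume)
      = II v lamt ρ (fun x => x j ^ 2 * x k ^ 2) := by
    have hmp := EuclideanSpace.volume_preserving_symm_measurableEquiv_toLp (Fin v)
    have hemb := (MeasurableEquiv.toLp 2 (Fin v → ℝ)).symm.measurableEmbedding
    rw [← hmp.setIntegral_preimage_emb hemb
      (fun y : Fin v → ℝ => y j ^ 2 * y k ^ 2 * ((2 * Real.pi * lamt) ^ (-(v : ℝ) / 2) *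
        Real.exp (-(∑ i, y i ^ 2) / (2 * lamt))))
      {y : Fin v → ℝ | ∑ i, y i ^ 2 ≤ ρ}]
    have hset : (MeasurableEquiv.toLp 2 (Fin v → ℝ)).symm ⁻¹' {y : Fin v → ℝ | ∑ i, y i ^ 2 ≤ ρ}
        = closedBall (0 : EuclideanSpace ℝ (Fin v)) (Real.sqrt ρ) := by
      ext x
      have hx : (MeasurableEquiv.toLp 2 (Fin v → ℝ)).symm x = fun i => x i := rfl
      simp only [Set.mem_preimage, Set.mem_setOf_eq, hx, mem_closedBall, dist_zero_right]
      rw [show (∑ i, x i ^ 2) = ‖x‖ ^ 2 from (norm_sq_eq x).symm]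
      rw [Real.le_sqrt (norm_nonneg x) hρ.le]
    rw [hset, II]
    refine setIntegral_congr_fun measurableSet_closedBall fun x _ => ?_
    have hx : (MeasurableEquiv.toLp 2 (Fin v → ℝ)).symm x = fun i => x i := rfl
    simp only [hx, gball]
    rw [show (∑ i, x i ^ 2) = ‖x‖ ^ 2 from (norm_sq_eq x).symm]
  rw [key, II_eval v hv lamt ρ hl hρ j k]

open GaussBall in
/-- Truncated fourth moments of an isotropic Gaussian over the ball of squared
radius `ρ`: `∫_{B_v(ρ)} x_j² x_k² g(x) dx = (1+2δ_{jk})·λ̃²·F_{v+4}(ρ/λ̃)`;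
in particular the fourth moment (`j = k`) equals `3λ̃²·F_{v+4}(ρ/λ̃)` and the
mixed moment (`j ≠ k`) equals `λ̃²·F_{v+4}(ρ/λ̃)`. -/
theorem gaussian_ball_fourth_moment (v : ℕ) (hv : 1 ≤ v) (lamt ρ : ℝ)
    (hl : 0 < lamt) (hρ : 0 < ρ) (j k : Fin v) :
    (∫ x in {y : Fin v → ℝ | ∑ i, y i ^ 2 ≤ ρ},
        x j ^ 2 * x k ^ 2 * ((2 * Real.pi * lamt) ^ (-(v : ℝ) / 2) *
          Real.exp (-(∑ i, x i ^ 2) / (2 * lamt))) ∂volume =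
      (1 + 2 * (if j = k then (1 : ℝ) else 0)) * lamt ^ 2 * chiCDF (v + 4) (ρ / lamt))
    ∧
    (j = k →
      ∫ x in {y : Fin v → ℝ | ∑ i, y i ^ 2 ≤ ρ},
          x j ^ 2 * x k ^ 2 * ((2 * Real.pi * lamt) ^ (-(v : ℝ) / 2) *
            Real.exp (-(∑ i, x i ^ 2) / (2 * lamt))) ∂volume =
        3 * lamt ^ 2 * chiCDF (v + 4) (ρ / lamt))
    ∧
    (j ≠ k →
      ∫ x in {y : Fin v → ℝ | ∑ i, y i ^ 2 ≤ ρ},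
          x j ^ 2 * x k ^ 2 * ((2 * Real.pi * lamt) ^ (-(v : ℝ) / 2) *
            Real.exp (-(∑ i, x i ^ 2) / (2 * lamt))) ∂volume =
        lamt ^ 2 * chiCDF (v + 4) (ρ / lamt)) := by
  have h := gaussian_ball_fourth_moment_aux v hv lamt ρ hl hρ j k
  refine ⟨h, fun hjk => ?_, fun hjk => ?_⟩
  · rw [h, if_pos hjk]; ring
  · rw [h, if_neg hjk]; ring
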